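/- arXiv:1304.5388 — 2 statements merged into one kernel-verified Lean document; each statement's English description precedes it below -/
import Mathlib

section
/- Let φ = ⋀_{i=1}^k C_i be a CNF formula and u a fresh variable. Define Φ = {C_i ∨ u : i = 1,...,k} and α = u. Then (Φ, α) is an argument (Φ is consistent, Φ ⊨ α, and no proper subset of Φ entails α) if and only if φ is unsatisfiable and removing any single clause from φ yields a satisfiable formula. -/
inductive PropForm (α : Type) where
  | var : α → PropForm α
  | tru : PropForm α
  | fls : PropForm α
  | not : PropForm α → PropForm α
  | and : PropForm α → PropForm α → PropForm α
  | or : PropForm α → PropForm α → PropForm α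
  deriving DecidableEq

def PropForm.eval {α : Type} (v : α → Bool) : PropForm α → Bool
  | .var a => v a
  | .tru => true
  | .fls => false
  | .not φ => !(PropForm.eval v φ)
  | .and φ ψ => PropForm.eval v φ && PropForm.eval v ψ
  | .or φ ψ => PropForm.eval v φ || PropForm.eval v ψ

/-- `v` satisfies every formula in `Φ`. -/
def Models {α : Type} (Φ : Set (PropForm α)) (v : α → Bool) : Prop :=
  ∀ φ ∈ Φ, PropForm.eval v φ = true

/-- `Φ` entails `ψ`. -/
def Entails {α : Type} (Φ : Set (PropForm α)) (ψ : PropForm α) : Prop :=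
  ∀ v : α → Bool, Models Φ v → PropForm.eval v ψ = true

/-- `Φ` is consistent. -/
def Consistent {α : Type} (Φ : Set (PropForm α)) : Prop :=
  ∃ v : α → Bool, Models Φ v

/-- Conjunction of a list of formulae. -/
def bigAnd {α : Type} (L : List (PropForm α)) : PropForm α :=
  L.foldr PropForm.and PropForm.tru

/-- The propositional formula corresponding to a clause given as a list of literals
(variable index together with polarity). -/
def clauseForm (L : List (ℕ × Bool)) : PropForm ℕ :=
  L.foldr (fun l acc => .or (if l.2 then .var l.1 else .not (.var l.1)) acc) .fls

/-- `(Φ, α)` is an argument: `Φ` is consistent, `Φ ⊨ α`, and no proper subset of `Φ`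
entails `α`. -/
def IsArgument (Φ : Finset (PropForm ℕ)) (α : PropForm ℕ) : Prop :=
  Consistent (↑Φ : Set (PropForm ℕ)) ∧ Entails (↑Φ : Set (PropForm ℕ)) α ∧
    ∀ Φ' ⊂ Φ, ¬ Entails ((Φ' : Finset (PropForm ℕ)) : Set (PropForm ℕ)) α

lemma clauseForm_eval (v : ℕ → Bool) (L : List (ℕ × Bool)) :
    (clauseForm L).eval v = true ↔ ∃ l ∈ L, v l.1 = l.2 := by
  induction L with
  | nil => simp [clauseForm, PropForm.eval]
  | cons a L ih =>
    obtain ⟨n, p⟩ := a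
    cases p <;> simp [clauseForm, PropForm.eval, clauseForm] at ih ⊢
    rw [ih]; tauto

lemma clauseForm_eval_update (v : ℕ → Bool) (b : Bool) (u : ℕ) (L : List (ℕ × Bool))
    (h : ∀ l ∈ L, l.1 ≠ u) :
    (clauseForm L).eval (Function.update v u b) = (clauseForm L).eval v := by
  induction L with
  | nil => rfl
  | cons a L ih =>
    have ha : a.1 ≠ u := h a (List.mem_cons_self)
    have hL : ∀ l ∈ L, l.1 ≠ u := fun l hl => h l (List.mem_cons_of_mem a hl)
    obtain ⟨n, p⟩ := a
    cases p <;>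
      simp [clauseForm, PropForm.eval, ih hL, Function.update_of_ne ha] at * <;>
      simp [clauseForm, PropForm.eval, ih hL, Function.update_of_ne ha]

lemma clauseForm_injective : Function.Injective clauseForm := by
  intro L1 L2 h
  induction L1 generalizing L2 with
  | nil =>
    cases L2 with
    | nil => rfl
    | cons b M => simp [clauseForm] at h
  | cons a L ih =>
    cases L2 with
    | nil => simp [clauseForm] at h
    | cons b M =>
      simp only [clauseForm, List.foldr] at h
      injection h with h1 h2
      have hLM : L = M := ih (show clauseForm L = clauseForm M from h2)
      obtain ⟨n, p⟩ := a
      obtain ⟨m, q⟩ := b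
      cases p <;> cases q <;> simp_all

/-- With `Φ = {Cᵢ ∨ u}` and `α = u`, the pair `(Φ, α)` is an argument iff
`φ = ⋀ᵢ Cᵢ` is unsatisfiable but removing any single clause makes it satisfiable. -/
theorem stmt16 (k : ℕ) (C : Fin k → List (ℕ × Bool)) (u : ℕ)
    (hfresh : ∀ i, ∀ l ∈ C i, l.1 ≠ u)
    (hinj : Function.Injective C) :
    IsArgument
      (Finset.image
        (fun i => PropForm.or (clauseForm (C i)) (.var u))
        (Finset.univ : Finset (Fin k)))
      (PropForm.var u)
    ↔ ((¬ ∃ σ : ℕ → Bool, ∀ i, ∃ l ∈ C i, σ l.1 = l.2) ∧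
        ∀ i : Fin k, ∃ σ : ℕ → Bool, ∀ j, j ≠ i → ∃ l ∈ C j, σ l.1 = l.2) := by
    classical
  set D : Fin k → PropForm ℕ := fun i => PropForm.or (clauseForm (C i)) (.var u) with hD
  set Φ : Finset (PropForm ℕ) := Finset.image D Finset.univ with hPhi
  have hmemD : ∀ i, D i ∈ Φ := fun i => Finset.mem_image_of_mem D (Finset.mem_univ i)
  constructor
  · rintro ⟨hcons, hent, hmin⟩
    constructor
    · rintro ⟨σ, hσ⟩
      have hm : Models (↑Φ : Set (PropForm ℕ)) (Function.update σ u false) := by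
        intro ψ hψ
        simp only [hPhi, Finset.coe_image, Set.mem_image, Finset.mem_coe] at hψ
        obtain ⟨i, -, rfl⟩ := hψ
        simp only [hD, PropForm.eval, clauseForm_eval_update σ false u (C i) (hfresh i)]
        have := (clauseForm_eval σ (C i)).mpr (hσ i)
        simp [this]
      have := hent _ hm
      simp [PropForm.eval, Function.update] at this
    · intro i
      have hsub : Φ.erase (D i) ⊂ Φ := Finset.erase_ssubset (hmemD i)
      have hne := hmin _ hsub
      rw [Entails] at hne
      push_neg at hne
      obtain ⟨v, hv, hvu⟩ := hne
      have hvu' : v u = false := by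
        simpa [PropForm.eval] using hvu
      refine ⟨v, fun j hj => ?_⟩
      have hmem : D j ∈ Φ.erase (D i) := by
        refine Finset.mem_erase.mpr ⟨?_, hmemD j⟩
        intro hEq
        exact hj (hinj (clauseForm_injective (by
          simpa [hD, PropForm.or.injEq] using hEq)))
      have := hv _ (by exact_mod_cast hmem)
      simp only [hD, PropForm.eval, hvu', Bool.or_false] at this
      exact (clauseForm_eval v (C j)).mp this
  · rintro ⟨hunsat, hsat⟩
    refine ⟨⟨fun _ => true, ?_⟩, ?_, ?_⟩
    · intro ψ hψ
      simp only [hPhi, Finset.coe_image, Set.mem_image, Finset.mem_coe] at hψ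
      obtain ⟨i, -, rfl⟩ := hψ
      simp [hD, PropForm.eval]
    · intro v hv
      by_contra h
      have hvu : v u = false := by
        simp only [PropForm.eval] at h
        exact Bool.not_eq_true _ ▸ (Bool.eq_false_iff.mpr h)
      refine hunsat ⟨v, fun i => ?_⟩
      have := hv (D i) (by exact_mod_cast hmemD i)
      simp only [hD, PropForm.eval, hvu, Bool.or_false] at this
      exact (clauseForm_eval v (C i)).mp this
    · intro Φ' hΦ' hE
      obtain ⟨x, hxΦ, hxΦ'⟩ := Finset.exists_of_ssubset hΦ'
      simp only [hPhi, Finset.mem_image, Finset.mem_univ, true_and] at hxΦ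
      obtain ⟨i, rfl⟩ := hxΦ
      obtain ⟨σ, hσ⟩ := hsat i
      have hm : Models (↑Φ' : Set (PropForm ℕ)) (Function.update σ u false) := by
        intro ψ hψ
        have hψΦ : ψ ∈ Φ := hΦ'.subset (by exact_mod_cast hψ)
        simp only [hPhi, Finset.mem_image, Finset.mem_univ, true_and] at hψΦ
        obtain ⟨j, rfl⟩ := hψΦ
        have hji : j ≠ i := by
          rintro rfl
          exact hxΦ' (by exact_mod_cast hψ)
        simp only [hD, PropForm.eval, clauseForm_eval_update σ false u (C j) (hfresh j)]
        have := (clauseForm_eval σ (C j)).mpr (hσ j hji)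
        simp [this]
      have := hE _ hm
      simp [PropForm.eval, Function.update] at this
end

section
/- Let φ = ⋀_{i=1}^k C_i be a 3-CNF formula over variables x_1,...,x_n, and let c_0, c_1,...,c_k, s be fresh variables. For each j define γ_j = (c_0 = x_j) ∧ ⋀_{i : x_j ∈ C_i} (c_{i−1} = c_i) and δ_j = (x_j = s) ∧ ⋀_{i : ¬x_j ∈ C_i} (c_{i−1} = c_i). Let Δ = {γ_j, δ_j : 1 ≤ j ≤ n} ∪ {ψ}, ψ = (c_k = s), and α = (c_0 = s). Then φ is satisfiable if and only if there exists Φ ⊆ Δ with ψ ∈ Φ, Φ consistent, Φ ⊨ α, and no proper subset of Φ entails α. -/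
/-- Variables: the original variables `x j`, the chain variables `c 0, ..., c k`, and `s`. -/
inductive V18 where
  | x : ℕ → V18
  | c : ℕ → V18
  | s : V18
  deriving DecidableEq

/-- The Boolean equality constraint `a = b`. -/
def eqF (a b : V18) : PropForm V18 :=
  .or (.and (.var a) (.var b)) (.and (.not (.var a)) (.not (.var b)))

/-- `γ_j = (c_0 = x_j) ∧ ⋀_{i : x_j ∈ C_i} (c_{i-1} = c_i)`. -/
def gammaF (k : ℕ) (C : Fin k → List (ℕ × Bool)) (j : ℕ) : PropForm V18 :=
  bigAnd (eqF (V18.c 0) (V18.x j) ::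
    ((List.finRange k).filterMap fun i =>
      if (j, true) ∈ C i then some (eqF (V18.c i.val) (V18.c (i.val + 1))) else none))

/-- `δ_j = (x_j = s) ∧ ⋀_{i : ¬x_j ∈ C_i} (c_{i-1} = c_i)`. -/
def deltaF (k : ℕ) (C : Fin k → List (ℕ × Bool)) (j : ℕ) : PropForm V18 :=
  bigAnd (eqF (V18.x j) V18.s ::
    ((List.finRange k).filterMap fun i =>
      if (j, false) ∈ C i then some (eqF (V18.c i.val) (V18.c (i.val + 1))) else none))

lemma eval_bigAnd {α : Type} (v : α → Bool) (L : List (PropForm α)) :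
    (bigAnd L).eval v = true ↔ ∀ φ ∈ L, φ.eval v = true := by
  induction L with
  | nil => simp [bigAnd, PropForm.eval]
  | cons h t ih =>
    simp only [bigAnd, List.foldr_cons, PropForm.eval, Bool.and_eq_true, List.mem_cons]
    rw [show (List.foldr PropForm.and PropForm.tru t) = bigAnd t from rfl, ih]
    constructor
    · rintro ⟨h1, h2⟩ φ (rfl | hφ)
      · exact h1
      · exact h2 φ hφ
    · intro hp
      exact ⟨hp h (Or.inl rfl), fun φ hφ => hp φ (Or.inr hφ)⟩

lemma eval_eqF (v : V18 → Bool) (a b : V18) :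
    (eqF a b).eval v = true ↔ v a = v b := by
  cases h1 : v a <;> cases h2 : v b <;> simp [eqF, PropForm.eval, h1, h2]

lemma mem_edgeList {k : ℕ} {C : Fin k → List (ℕ × Bool)} {j : ℕ} {b : Bool}
    {φ : PropForm V18} :
    (φ ∈ (List.finRange k).filterMap fun i =>
      if (j, b) ∈ C i then some (eqF (V18.c i.val) (V18.c (i.val + 1))) else none) ↔
    ∃ i : Fin k, (j, b) ∈ C i ∧ φ = eqF (V18.c i.val) (V18.c (i.val + 1)) := by
  rw [List.mem_filterMap]
  constructor
  · rintro ⟨i, -, hi⟩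
    split_ifs at hi with h
    · exact ⟨i, h, (Option.some_inj.1 hi).symm⟩
  · rintro ⟨i, h, rfl⟩
    exact ⟨i, List.mem_finRange i, by simp [h]⟩

lemma exists_min_finset (a : PropForm V18) :
    ∀ F : Finset (PropForm V18), Entails ↑F a →
      ∃ G : Finset (PropForm V18), G ⊆ F ∧ Entails (↑G : Set (PropForm V18)) a ∧
        ∀ Φ' ⊂ (↑G : Set (PropForm V18)), ¬ Entails Φ' a := by
  classical
  intro F
  induction F using Finset.strongInductionOn with
  | _ F ih =>
    intro hF
    by_cases h : ∃ χ ∈ F, Entails ↑(F.erase χ) a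
    · obtain ⟨χ, hχ, he⟩ := h
      obtain ⟨G, h1, h2, h3⟩ := ih (F.erase χ) (Finset.erase_ssubset hχ) he
      exact ⟨G, h1.trans (Finset.erase_subset _ _), h2, h3⟩
    · refine ⟨F, subset_rfl, hF, ?_⟩
      intro Φ' hss hent
      obtain ⟨χ, hχF, hχΦ⟩ := Set.exists_of_ssubset hss
      refine h ⟨χ, hχF, ?_⟩
      intro v hv
      refine hent v (fun φ hφ => hv φ ?_)
      have h1 : φ ∈ (↑F : Set (PropForm V18)) := hss.subset hφ
      have h2 : φ ≠ χ := fun hh => hχΦ (hh ▸ hφ)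
      simp only [Finset.coe_erase, Set.mem_diff, Set.mem_singleton_iff]
      exact ⟨h1, h2⟩

lemma gammaF_true (k : ℕ) (C : Fin k → List (ℕ × Bool)) (j : ℕ) :
    PropForm.eval (fun _ => true) (gammaF k C j) = true := by
  rw [gammaF, eval_bigAnd]
  intro φ hφ
  rcases List.mem_cons.1 hφ with rfl | hφ
  · simp [eval_eqF]
  · obtain ⟨i, -, rfl⟩ := mem_edgeList.1 hφ
    simp [eval_eqF]

lemma deltaF_true (k : ℕ) (C : Fin k → List (ℕ × Bool)) (j : ℕ) :
    PropForm.eval (fun _ => true) (deltaF k C j) = true := by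
  rw [deltaF, eval_bigAnd]
  intro φ hφ
  rcases List.mem_cons.1 hφ with rfl | hφ
  · simp [eval_eqF]
  · obtain ⟨i, -, rfl⟩ := mem_edgeList.1 hφ
    simp [eval_eqF]

/-- The 3-CNF formula `φ = ⋀ᵢ Cᵢ` over variables `x 0, ..., x (n-1)` is satisfiable iff
`Δ = {γ_j, δ_j : j < n} ∪ {ψ}` with `ψ = (c_k = s)` contains a minimal support `Φ` for
`α = (c_0 = s)` with `ψ ∈ Φ`. -/
theorem stmt18 (k n : ℕ) (C : Fin k → List (ℕ × Bool))
    (hlen : ∀ i, (C i).length ≤ 3) (hvar : ∀ i, ∀ l ∈ C i, l.1 < n) :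
    (∃ σ : ℕ → Bool, ∀ i, ∃ l ∈ C i, σ l.1 = l.2)
    ↔ (∃ Φ : Set (PropForm V18),
        Φ ⊆ ({χ | ∃ j < n, χ = gammaF k C j ∨ χ = deltaF k C j} ∪ {eqF (V18.c k) V18.s}) ∧
        eqF (V18.c k) V18.s ∈ Φ ∧
        Consistent Φ ∧
        Entails Φ (eqF (V18.c 0) V18.s) ∧
        ∀ Φ' ⊂ Φ, ¬ Entails Φ' (eqF (V18.c 0) V18.s)) := by
  classical
  constructor
  · rintro ⟨σ, hσ⟩
    set ch : ℕ → PropForm V18 := fun j => if σ j then gammaF k C j else deltaF k C j with hch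
    set G0 : Finset (PropForm V18) :=
      insert (eqF (V18.c k) V18.s) ((Finset.range n).image ch) with hG0
    have hG0ent : Entails ↑G0 (eqF (V18.c 0) V18.s) := by
      intro v hv
      have key : ∀ m, m ≤ k → v (V18.c m) = v (V18.c 0) := by
        intro m
        induction m with
        | zero => intro _; rfl
        | succ m ihm =>
          intro hm
          have hm' : m < k := hm
          obtain ⟨l, hl, hσl⟩ := hσ ⟨m, hm'⟩
          have hj : l.1 < n := hvar ⟨m, hm'⟩ l hl
          have hmem : ch l.1 ∈ G0 := by
            rw [hG0]
            exact Finset.mem_insert_of_mem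
              (Finset.mem_image_of_mem _ (Finset.mem_range.2 hj))
          have hev := hv _ (Finset.mem_coe.2 hmem)
          have hedge : v (V18.c m) = v (V18.c (m + 1)) := by
            cases hb : σ l.1 with
            | true =>
              have h2 : l.2 = true := by rw [← hσl, hb]
              have hlt : (l.1, true) ∈ C ⟨m, hm'⟩ := by
                rw [← h2, Prod.mk.eta]; exact hl
              have hcheq : ch l.1 = gammaF k C l.1 := by rw [hch]; simp [hb]
              rw [hcheq, gammaF, eval_bigAnd] at hev
              have := hev (eqF (V18.c m) (V18.c (m + 1)))
                (List.mem_cons_of_mem _ (mem_edgeList.2 ⟨⟨m, hm'⟩, hlt, rfl⟩))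
              exact (eval_eqF v _ _).1 this
            | false =>
              have h2 : l.2 = false := by rw [← hσl, hb]
              have hlt : (l.1, false) ∈ C ⟨m, hm'⟩ := by
                rw [← h2, Prod.mk.eta]; exact hl
              have hcheq : ch l.1 = deltaF k C l.1 := by rw [hch]; simp [hb]
              rw [hcheq, deltaF, eval_bigAnd] at hev
              have := hev (eqF (V18.c m) (V18.c (m + 1)))
                (List.mem_cons_of_mem _ (mem_edgeList.2 ⟨⟨m, hm'⟩, hlt, rfl⟩))
              exact (eval_eqF v _ _).1 this
          rw [← hedge]
          exact ihm (Nat.le_of_lt hm')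
      have hck := key k le_rfl
      have hψmem : eqF (V18.c k) V18.s ∈ G0 := by rw [hG0]; exact Finset.mem_insert_self _ _
      have hks := (eval_eqF v _ _).1 (hv _ (Finset.mem_coe.2 hψmem))
      rw [eval_eqF]
      exact hck.symm.trans hks
    obtain ⟨G, hGsub, hGent, hGmin⟩ := exists_min_finset _ G0 hG0ent
    have hψG : eqF (V18.c k) V18.s ∈ G := by
      by_contra hψ
      set w : V18 → Bool := fun z => match z with
        | V18.x j => σ j
        | V18.c _ => true
        | V18.s => false with hwdef
      have hmod : Models ↑G w := by
        intro χ hχ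
        have hχ0 : χ ∈ G0 := hGsub hχ
        rw [hG0] at hχ0
        rcases Finset.mem_insert.1 hχ0 with rfl | hχ1
        · exact absurd hχ hψ
        · obtain ⟨j, hj, rfl⟩ := Finset.mem_image.1 hχ1
          by_cases hb : σ j
          · have hcheq : ch j = gammaF k C j := by rw [hch]; simp [hb]
            rw [hcheq, gammaF, eval_bigAnd]
            intro φ hφ
            rcases List.mem_cons.1 hφ with rfl | hφ
            · rw [eval_eqF]; simp [hwdef, hb]
            · obtain ⟨i', -, rfl⟩ := mem_edgeList.1 hφ
              rw [eval_eqF]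
          · have hcheq : ch j = deltaF k C j := by rw [hch]; simp [hb]
            rw [hcheq, deltaF, eval_bigAnd]
            intro φ hφ
            rcases List.mem_cons.1 hφ with rfl | hφ
            · rw [eval_eqF]; simp [hwdef]; simp at hb; exact hb
            · obtain ⟨i', -, rfl⟩ := mem_edgeList.1 hφ
              rw [eval_eqF]
      have := hGent w hmod
      rw [eval_eqF] at this
      simp [hwdef] at this
    refine ⟨↑G, ?_, Finset.mem_coe.2 hψG, ⟨fun _ => true, ?_⟩, hGent, hGmin⟩
    · intro χ hχ
      have hχ0 : χ ∈ G0 := hGsub hχ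
      rw [hG0] at hχ0
      rcases Finset.mem_insert.1 hχ0 with rfl | hχ1
      · exact Or.inr rfl
      · obtain ⟨j, hj, rfl⟩ := Finset.mem_image.1 hχ1
        refine Or.inl ⟨j, Finset.mem_range.1 hj, ?_⟩
        by_cases hb : σ j
        · left; rw [hch]; simp [hb]
        · right; rw [hch]; simp [hb]
    · intro χ hχ
      have hχ0 : χ ∈ G0 := hGsub hχ
      rw [hG0] at hχ0
      rcases Finset.mem_insert.1 hχ0 with rfl | hχ1
      · simp [eval_eqF]
      · obtain ⟨j, hj, rfl⟩ := Finset.mem_image.1 hχ1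
        by_cases hb : σ j
        · rw [hch]; simp only [hb, if_true]; exact gammaF_true k C j
        · rw [hch]; simp only [hb, if_false]; exact deltaF_true k C j
  · rintro ⟨Φ, hsub, hψ, -, hent, hmin⟩
    set σ : ℕ → Bool := fun j => if gammaF k C j ∈ Φ then true else false with hσdef
    refine ⟨σ, ?_⟩
    intro i
    by_contra hbad
    push_neg at hbad
    have honeof : ∀ j, gammaF k C j ∈ Φ → deltaF k C j ∉ Φ := by
      intro j hg hd
      have hpair : ({gammaF k C j, deltaF k C j} : Set (PropForm V18)) ⊂ Φ := by
        rw [Set.ssubset_def]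
        constructor
        · intro χ hχ
          simp only [Set.mem_insert_iff, Set.mem_singleton_iff] at hχ
          rcases hχ with rfl | rfl
          · exact hg
          · exact hd
        · intro hΦsub
          have hm := hΦsub hψ
          simp only [Set.mem_insert_iff, Set.mem_singleton_iff] at hm
          rcases hm with h | h <;> simp [gammaF, deltaF, bigAnd, eqF] at h
      have hpe : Entails ({gammaF k C j, deltaF k C j} : Set (PropForm V18))
          (eqF (V18.c 0) V18.s) := by
        intro v hv
        have h1 := hv (gammaF k C j) (Set.mem_insert _ _)
        have h2 := hv (deltaF k C j) (Set.mem_insert_of_mem _ rfl)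
        rw [gammaF, eval_bigAnd] at h1
        rw [deltaF, eval_bigAnd] at h2
        have e1 := (eval_eqF v _ _).1 (h1 _ List.mem_cons_self)
        have e2 := (eval_eqF v _ _).1 (h2 _ List.mem_cons_self)
        rw [eval_eqF]
        exact e1.trans e2
      exact hmin _ hpair hpe
    set w : V18 → Bool := fun z => match z with
      | V18.x j => σ j
      | V18.c m => decide (m ≤ i.val)
      | V18.s => false with hwdef
    have hmod : Models Φ w := by
      intro χ hχ
      rcases hsub hχ with hl | hr
      · obtain ⟨j, hj, hc⟩ := hl
        rcases hc with rfl | rfl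
        · have hbj : σ j = true := by rw [hσdef]; simp [hχ]
          rw [gammaF, eval_bigAnd]
          intro φ hφ
          rcases List.mem_cons.1 hφ with rfl | hφ
          · rw [eval_eqF]; simp [hwdef, hbj]
          · obtain ⟨i', hmem, rfl⟩ := mem_edgeList.1 hφ
            rw [eval_eqF]
            have hne : i'.val ≠ i.val := by
              intro he
              have hii : i' = i := Fin.ext he
              subst hii
              have := hbad (j, true) hmem
              simp [hbj] at this
            simp only [hwdef]
            exact decide_eq_decide.2 (by omega)
        · have hbj : σ j = false := by
            by_cases hg : gammaF k C j ∈ Φ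
            · exact absurd hχ (honeof j hg)
            · rw [hσdef]; simp [hg]
          rw [deltaF, eval_bigAnd]
          intro φ hφ
          rcases List.mem_cons.1 hφ with rfl | hφ
          · rw [eval_eqF]; simp [hwdef, hbj]
          · obtain ⟨i', hmem, rfl⟩ := mem_edgeList.1 hφ
            rw [eval_eqF]
            have hne : i'.val ≠ i.val := by
              intro he
              have hii : i' = i := Fin.ext he
              subst hii
              have := hbad (j, false) hmem
              simp [hbj] at this
            simp only [hwdef]
            exact decide_eq_decide.2 (by omega)
      · rw [Set.mem_singleton_iff] at hr
        subst hr
        rw [eval_eqF]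
        simp only [hwdef]
        have : ¬ (k ≤ i.val) := by omega
        simp [this]
    have := hent w hmod
    rw [eval_eqF] at this
    simp [hwdef] at this
end
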